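/- With L1 = C/2, L2 = (I'-I)/2, L3 = {L1,L2} as constructed from the Zernike integrals, the Poisson brackets satisfy {L1, L3} = -L2 and {L2, L3} = -L1(γ1^2 + 2γ2 H + 8γ2^2 L1^2), where H = p1^2 + p2^2 + γ1(q1 p1 + q2 p2) + γ2(q1 p1 + q2 p2)^2. -/

import Mathlib

open Real

/-- Canonical Poisson bracket on ℝ⁴ with coordinates (q1, q2, p1, p2). -/
noncomputable def pb (f g : ℝ → ℝ → ℝ → ℝ → ℝ) : ℝ → ℝ → ℝ → ℝ → ℝ :=
  fun q1 q2 p1 p2 =>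
      deriv (fun x => f x q2 p1 p2) q1 * deriv (fun x => g q1 q2 x p2) p1
    + deriv (fun x => f q1 x p1 p2) q2 * deriv (fun x => g q1 q2 p1 x) p2
    - deriv (fun x => f q1 q2 x p2) p1 * deriv (fun x => g x q2 p1 p2) q1
    - deriv (fun x => f q1 q2 p1 x) p2 * deriv (fun x => g q1 x p1 p2) q2

lemma deriv_hmul (c x : ℝ) : deriv (HMul.hMul c) x = c := by
  simpa using deriv_const_mul c (differentiable_id.differentiableAt (x := x))

theorem zernike_racah_algebra (γ1 γ2 : ℝ)
    (L1 L2 L3 H : ℝ → ℝ → ℝ → ℝ → ℝ)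
    (hL1 : L1 = fun q1 q2 p1 p2 => (q1*p2 - q2*p1)/2)
    (hL2 : L2 = fun q1 q2 p1 p2 =>
      ((p1^2 + γ1*q1*p1 + γ2*(q1^2 + q2^2)*p1^2)
       - (p2^2 + γ1*q2*p2 + γ2*(q1^2 + q2^2)*p2^2))/2)
    (hL3 : L3 = fun q1 q2 p1 p2 =>
      (1 + γ2*(q1^2 + q2^2))*p1*p2 + (γ1/2)*(q1*p2 + q2*p1))
    (hH : H = fun q1 q2 p1 p2 =>
      p1^2 + p2^2 + γ1*(q1*p1 + q2*p2) + γ2*(q1*p1 + q2*p2)^2) :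
    pb L1 L3 = -L2 ∧
    pb L2 L3 = fun q1 q2 p1 p2 =>
      -(L1 q1 q2 p1 p2) * (γ1^2 + 2*γ2*(H q1 q2 p1 p2) + 8*γ2^2*(L1 q1 q2 p1 p2)^2) := by
  subst hL1 hL2 hL3 hH
  constructor <;>
  · funext q1 q2 p1 p2
    simp only [pb, Pi.neg_apply]
    simp (disch := fun_prop) only [deriv_fun_add, deriv_fun_sub, deriv_fun_mul, deriv_fun_pow,
      deriv_div_const, deriv_const_mul, deriv_mul_const, deriv_id'', deriv_const',
      deriv_pow_field, deriv_hmul]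
    ring
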